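/- arXiv:1608.08764 — 3 statements merged into one kernel-verified Lean document; each statement's English description precedes it below -/
import Mathlib

section
/- For every positive integer N and every finitely supported sequence of non-negative integers (r_i) with N = ∑ r_i F_i (where F_1 = 1, F_2 = 2, F_{n+1} = F_n + F_{n-1}), the number of summands ∑ r_i is at least the number of summands in the Zeckendorf decomposition of N. -/
/-- Fibonacci numbers indexed so that `F 1 = 1`, `F 2 = 2`,
`F (n+1) = F n + F (n-1)`. -/
def F (n : ℕ) : ℕ := Nat.fib (n + 1)

lemma F_pos (n : ℕ) : 0 < F n := by
  simp [F]

lemma F_mono : Monotone F := fun a b h => Nat.fib_mono (by omega)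

lemma F_add (i : ℕ) : F i + F (i + 1) = F (i + 2) :=
  (Nat.fib_add_two (n := i + 1)).symm

lemma F_lt {n : ℕ} (h : 1 ≤ n) : F n < F (n + 1) := by
  simp only [F]
  exact Nat.fib_lt_fib_succ (by omega)

/-- weight function used for termination of normalization -/
def wgt (i : ℕ) : ℕ := if i = 1 then 0 else i

/-- measure on multisets of indices -/
def mu (M : Multiset ℕ) : ℕ := (M.map (fun i => 3 + wgt i)).sum

lemma mu_cons (a : ℕ) (s : Multiset ℕ) : mu (a ::ₘ s) = 3 + wgt a + mu s := by
  simp [mu]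

/-- Bound for Zeckendorf-type sums: if all indices are `≤ m`, the sum is `< F (m+1)`. -/
lemma zeck_bound (m : ℕ) : ∀ T : Finset ℕ, (∀ i ∈ T, 1 ≤ i) → (∀ i ∈ T, i + 1 ∉ T) →
    (∀ i ∈ T, i ≤ m) → ∑ i ∈ T, F i < F (m + 1) := by
  induction m using Nat.strong_induction_on with
  | _ m ih =>
    intro T h1 h2 h3
    rcases T.eq_empty_or_nonempty with rfl | hne
    · simpa using F_pos (m + 1)
    · obtain ⟨a, haT, hamax⟩ : ∃ a ∈ T, ∀ i ∈ T, i ≤ a :=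
        ⟨T.max' hne, T.max'_mem hne, fun i hi => Finset.le_max' T i hi⟩
      have ha1 : 1 ≤ a := h1 a haT
      have ham : a ≤ m := h3 a haT
      have hsplit : F a + ∑ i ∈ T.erase a, F i = ∑ i ∈ T, F i :=
        Finset.add_sum_erase T F haT
      have herase : ∀ i ∈ T.erase a, i ≤ a - 2 := by
        intro i hi
        have hiT : i ∈ T := Finset.mem_of_mem_erase hi
        have hia : i ≠ a := Finset.ne_of_mem_erase hi
        have hle : i ≤ a := hamax i hiT
        have : i + 1 ≠ a := by
          intro h; exact h2 i hiT (h ▸ haT)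
        omega
      have hlt : ∑ i ∈ T.erase a, F i < F (a - 2 + 1) := by
        apply ih (a - 2) (by omega)
        · intro i hi; exact h1 i (Finset.mem_of_mem_erase hi)
        · intro i hi hmem
          exact h2 i (Finset.mem_of_mem_erase hi) (Finset.mem_of_mem_erase hmem)
        · exact herase
      have hrec : F (a - 2 + 1) + F a = F (a + 1) := by
        rcases Nat.lt_or_ge a 2 with hc | hc
        · interval_cases a
          · decide
        · have h' := F_add (a - 1)
          rw [show a - 1 + 1 = a by omega, show a - 1 + 2 = a + 1 by omega] at h'
          rw [show a - 2 + 1 = a - 1 by omega]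
          exact h'
      have : ∑ i ∈ T, F i < F a + F (a - 2 + 1) := by omega
      have : ∑ i ∈ T, F i < F (a + 1) := by omega
      exact lt_of_lt_of_le this (F_mono (by omega))

/-- Uniqueness of Zeckendorf decompositions. -/
lemma zeck_unique : ∀ N : ℕ, ∀ S T : Finset ℕ,
    (∀ i ∈ S, 1 ≤ i) → (∀ i ∈ S, i + 1 ∉ S) → (∑ i ∈ S, F i = N) →
    (∀ i ∈ T, 1 ≤ i) → (∀ i ∈ T, i + 1 ∉ T) → (∑ i ∈ T, F i = N) → S = T := by
  intro N
  induction N using Nat.strong_induction_on with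
  | _ N ih =>
    intro S T hS1 hS2 hSsum hT1 hT2 hTsum
    rcases Nat.eq_zero_or_pos N with rfl | hN
    · have hSe : S = ∅ := by
        by_contra h
        obtain ⟨x, hx⟩ := Finset.nonempty_of_ne_empty h
        have : 0 < ∑ i ∈ S, F i :=
          Finset.sum_pos' (fun i _ => Nat.zero_le _) ⟨x, hx, F_pos x⟩
        omega
      have hTe : T = ∅ := by
        by_contra h
        obtain ⟨x, hx⟩ := Finset.nonempty_of_ne_empty h
        have : 0 < ∑ i ∈ T, F i :=
          Finset.sum_pos' (fun i _ => Nat.zero_le _) ⟨x, hx, F_pos x⟩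
        omega
      rw [hSe, hTe]
    · have hSne : S.Nonempty := by
        by_contra h
        rw [Finset.not_nonempty_iff_eq_empty] at h
        rw [h] at hSsum; simp at hSsum; omega
      have hTne : T.Nonempty := by
        by_contra h
        rw [Finset.not_nonempty_iff_eq_empty] at h
        rw [h] at hTsum; simp at hTsum; omega
      obtain ⟨a, haT, hamax⟩ : ∃ a ∈ S, ∀ i ∈ S, i ≤ a :=
        ⟨S.max' hSne, S.max'_mem hSne, fun i hi => Finset.le_max' S i hi⟩
      obtain ⟨b, hbT, hbmax⟩ : ∃ b ∈ T, ∀ i ∈ T, i ≤ b :=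
        ⟨T.max' hTne, T.max'_mem hTne, fun i hi => Finset.le_max' T i hi⟩
      have hFa : F a ≤ N := hSsum ▸ Finset.single_le_sum (fun i _ => Nat.zero_le _) haT
      have hFb : F b ≤ N := hTsum ▸ Finset.single_le_sum (fun i _ => Nat.zero_le _) hbT
      have hNa : N < F (a + 1) := by
        rw [← hSsum]
        exact zeck_bound a S hS1 hS2 hamax
      have hNb : N < F (b + 1) := by
        rw [← hTsum]
        exact zeck_bound b T hT1 hT2 hbmax
      have hab : a = b := by
        by_contra h
        rcases Nat.lt_or_ge a b with hlt | hge
        · have : F (a + 1) ≤ F b := F_mono (by omega)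
          omega
        · have hlt : b < a := by omega
          have : F (b + 1) ≤ F a := F_mono (by omega)
          omega
      subst hab
      have he : S.erase a = T.erase a := by
        apply ih (N - F a) (by have := F_pos a; omega)
        · intro i hi; exact hS1 i (Finset.mem_of_mem_erase hi)
        · intro i hi hm; exact hS2 i (Finset.mem_of_mem_erase hi) (Finset.mem_of_mem_erase hm)
        · have := Finset.add_sum_erase S F haT; omega
        · intro i hi; exact hT1 i (Finset.mem_of_mem_erase hi)
        · intro i hi hm; exact hT2 i (Finset.mem_of_mem_erase hi) (Finset.mem_of_mem_erase hm)
        · have := Finset.add_sum_erase T F hbT; omega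
      have : insert a (S.erase a) = insert a (T.erase a) := by rw [he]
      rwa [Finset.insert_erase haT, Finset.insert_erase hbT] at this

/-- Any multiset representation can be normalized to a Zeckendorf set with no more summands. -/
lemma key : ∀ n : ℕ, ∀ M : Multiset ℕ, mu M = n → (∀ i ∈ M, 1 ≤ i) →
    ∃ T : Finset ℕ, (∀ i ∈ T, 1 ≤ i) ∧ (∀ i ∈ T, i + 1 ∉ T) ∧
      (∑ i ∈ T, F i = (M.map F).sum) ∧ T.card ≤ Multiset.card M := by
  intro n
  induction n using Nat.strong_induction_on with
  | _ n ih =>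
    intro M hmu h1
    by_cases hA : ∃ i ∈ M, i + 1 ∈ M
    · obtain ⟨i, hiM, hi1M⟩ := hA
      have hi1 : 1 ≤ i := h1 i hiM
      set M₁ := M.erase i with hM₁
      have hco : i ::ₘ M₁ = M := Multiset.cons_erase hiM
      have hi1M₁ : i + 1 ∈ M₁ := by
        rw [hM₁, Multiset.mem_erase_of_ne (by omega)]; exact hi1M
      set M₂ := M₁.erase (i + 1) with hM₂
      have hco2 : (i + 1) ::ₘ M₂ = M₁ := Multiset.cons_erase hi1M₁
      have hMeq : M = i ::ₘ (i + 1) ::ₘ M₂ := by rw [hco2, hco]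
      set M' := (i + 2) ::ₘ M₂ with hM'
      have hmu' : mu M' < n := by
        rw [← hmu, hMeq, hM', mu_cons, mu_cons, mu_cons]
        have w1 : wgt (i + 1) = i + 1 := by simp [wgt]; omega
        have w2 : wgt (i + 2) = i + 2 := by simp [wgt]
        rw [w1, w2]
        omega
      obtain ⟨T, hT1, hT2, hT3, hT4⟩ := ih (mu M') hmu' M' rfl (by
        intro j hj
        rw [hM', Multiset.mem_cons] at hj
        rcases hj with rfl | hj
        · omega
        · exact h1 j (by rw [hMeq]; simp [hj]))
      refine ⟨T, hT1, hT2, ?_, ?_⟩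
      · rw [hT3, hM', hMeq]
        simp only [Multiset.map_cons, Multiset.sum_cons]
        have := F_add i
        omega
      · rw [hM'] at hT4
        rw [hMeq]
        simp only [Multiset.card_cons] at hT4 ⊢
        omega
    · by_cases hB : ∃ i ∈ M, 2 ≤ M.count i
      · obtain ⟨i, hiM, hcnt⟩ := hB
        have hi1 : 1 ≤ i := h1 i hiM
        set M₁ := M.erase i with hM₁
        have hco : i ::ₘ M₁ = M := Multiset.cons_erase hiM
        have hiM₁ : i ∈ M₁ := by
          rw [hM₁, ← Multiset.count_pos, Multiset.count_erase_self]
          omega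
        set M₂ := M₁.erase i with hM₂
        have hco2 : i ::ₘ M₂ = M₁ := Multiset.cons_erase hiM₁
        have hMeq : M = i ::ₘ i ::ₘ M₂ := by rw [hco2, hco]
        have hM₂mem : ∀ j ∈ M₂, j ∈ M := by
          intro j hj; rw [hMeq]; simp [hj]
        -- choose replacement pair
        rcases Nat.lt_or_ge i 3 with hilt | hige
        · -- i = 1 or i = 2
          interval_cases i
          · -- i = 1 : F 1 + F 1 = F 2
            set M' := 2 ::ₘ M₂ with hM'
            have hmu' : mu M' < n := by
              rw [← hmu, hMeq, hM', mu_cons, mu_cons, mu_cons]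
              simp [wgt]
              omega
            obtain ⟨T, hT1, hT2, hT3, hT4⟩ := ih (mu M') hmu' M' rfl (by
              intro j hj
              rw [hM', Multiset.mem_cons] at hj
              rcases hj with rfl | hj
              · omega
              · exact h1 j (hM₂mem j hj))
            refine ⟨T, hT1, hT2, ?_, ?_⟩
            · rw [hT3, hM', hMeq]
              simp only [Multiset.map_cons, Multiset.sum_cons]
              have e1 : F 1 = 1 := by decide
              have e2 : F 2 = 2 := by decide
              omega
            · rw [hM'] at hT4
              rw [hMeq]
              simp only [Multiset.card_cons] at hT4 ⊢
              omega
          · -- i = 2 : F 2 + F 2 = F 3 + F 1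
            set M' := 3 ::ₘ 1 ::ₘ M₂ with hM'
            have hmu' : mu M' < n := by
              rw [← hmu, hMeq, hM', mu_cons, mu_cons, mu_cons, mu_cons]
              simp [wgt]
              omega
            obtain ⟨T, hT1, hT2, hT3, hT4⟩ := ih (mu M') hmu' M' rfl (by
              intro j hj
              rw [hM', Multiset.mem_cons, Multiset.mem_cons] at hj
              rcases hj with rfl | rfl | hj
              · omega
              · omega
              · exact h1 j (hM₂mem j hj))
            refine ⟨T, hT1, hT2, ?_, ?_⟩
            · rw [hT3, hM', hMeq]
              simp only [Multiset.map_cons, Multiset.sum_cons]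
              have e1 : F 1 = 1 := by decide
              have e2 : F 2 = 2 := by decide
              have e3 : F 3 = 3 := by decide
              omega
            · rw [hM'] at hT4
              rw [hMeq]
              simp only [Multiset.card_cons] at hT4 ⊢
              omega
        · -- i ≥ 3 : F i + F i = F (i+1) + F (i-2)
          set M' := (i + 1) ::ₘ (i - 2) ::ₘ M₂ with hM'
          have hmu' : mu M' < n := by
            rw [← hmu, hMeq, hM', mu_cons, mu_cons, mu_cons, mu_cons]
            have w1 : wgt i = i := by simp [wgt]; omega
            have w2 : wgt (i + 1) = i + 1 := by simp [wgt]; omega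
            have w3 : wgt (i - 2) ≤ i - 2 := by
              simp only [wgt]; split <;> omega
            rw [w1, w2]
            omega
          obtain ⟨T, hT1, hT2, hT3, hT4⟩ := ih (mu M') hmu' M' rfl (by
            intro j hj
            rw [hM', Multiset.mem_cons, Multiset.mem_cons] at hj
            rcases hj with rfl | rfl | hj
            · omega
            · omega
            · exact h1 j (hM₂mem j hj))
          refine ⟨T, hT1, hT2, ?_, ?_⟩
          · rw [hT3, hM', hMeq]
            simp only [Multiset.map_cons, Multiset.sum_cons]
            have key1 : F (i - 2) + F (i - 1) = F i := by
              have := F_add (i - 2)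
              have e1 : i - 2 + 1 = i - 1 := by omega
              have e2 : i - 2 + 2 = i := by omega
              rw [e1, e2] at this
              exact this
            have key2 : F (i - 1) + F i = F (i + 1) := by
              have := F_add (i - 1)
              have e1 : i - 1 + 1 = i := by omega
              have e2 : i - 1 + 2 = i + 1 := by omega
              rw [e1, e2] at this
              exact this
            omega
          · rw [hM'] at hT4
            rw [hMeq]
            simp only [Multiset.card_cons] at hT4 ⊢
            omega
      · -- M is already a Zeckendorf set
        push_neg at hA hB
        have hnodup : M.Nodup := by
          rw [Multiset.nodup_iff_count_le_one]
          intro a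
          by_cases ha : a ∈ M
          · have := hB a ha; omega
          · rw [Multiset.count_eq_zero_of_notMem ha]; omega
        refine ⟨M.toFinset, ?_, ?_, ?_, ?_⟩
        · intro i hi; exact h1 i (Multiset.mem_toFinset.mp hi)
        · intro i hi hm
          exact hA i (Multiset.mem_toFinset.mp hi) (Multiset.mem_toFinset.mp hm)
        · rw [Finset.sum]
          rw [Multiset.toFinset_val, Multiset.dedup_eq_self.mpr hnodup]
        · rw [Finset.card]
          rw [Multiset.toFinset_val, Multiset.dedup_eq_self.mpr hnodup]

lemma toMultiset_map_sum (f : ℕ →₀ ℕ) (g : ℕ → ℕ) :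
    ((Finsupp.toMultiset f).map g).sum = f.sum fun i v => v * g i := by
  induction f using Finsupp.induction with
  | zero => simp
  | single_add a b f haf hb ih =>
    rw [Finsupp.toMultiset_add, Multiset.map_add, Multiset.sum_add, ih,
      Finsupp.toMultiset_single, Finsupp.sum_add_index (by simp) (by intros; ring)]
    simp [Finsupp.sum_single_index, Multiset.map_nsmul, Multiset.nsmul_singleton,
      Multiset.sum_replicate, mul_comm]

/-- Any representation of a positive integer `N` as a sum of
Fibonacci numbers (with non-negative integer multiplicities) uses at least as
many summands as the Zeckendorf decomposition of `N` (given by a set `S` of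
indices `≥ 1`, no two consecutive, with `∑_{i ∈ S} F i = N`). -/
theorem zeckendorf_summand_minimal (N : ℕ) (hN : 0 < N)
    (S : Finset ℕ) (hS1 : ∀ i ∈ S, 1 ≤ i) (hS2 : ∀ i ∈ S, i + 1 ∉ S)
    (hSsum : ∑ i ∈ S, F i = N)
    (r : ℕ →₀ ℕ) (hr1 : ∀ i ∈ r.support, 1 ≤ i)
    (hr : (r.sum fun i v => v * F i) = N) :
    S.card ≤ r.sum fun _ v => v := by
  set M := Finsupp.toMultiset r with hM
  have hMsum : (M.map F).sum = N := by
    rw [hM, toMultiset_map_sum]; exact hr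
  have hMcard : Multiset.card M = r.sum fun _ v => v := by
    rw [hM, Finsupp.card_toMultiset]; rfl
  have hMmem : ∀ i ∈ M, 1 ≤ i := by
    intro i hi
    exact hr1 i ((Finsupp.mem_toMultiset r i).mp hi)
  obtain ⟨T, hT1, hT2, hT3, hT4⟩ := key (mu M) M rfl hMmem
  have hST : S = T := zeck_unique N S T hS1 hS2 hSsum hT1 hT2 (by rw [hT3, hMsum])
  rw [hST, ← hMcard]
  exact hT4
end

section
/- Let σ = (c_1, ..., c_t) be a signature of non-negative integers with c_1 ≥ c_2 ≥ ... ≥ c_t ≥ 1, and let H be the associated recurrence sequence with ideal initial conditions. Then for every non-negative integer m and every representation (r_i) of m (finite support, non-negative integers, ∑ r_i H_i = m), the number of summands ∑ r_i is at least the number of summands in the generalized Zeckendorf decomposition of m. -/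
def Hseq (t : ℕ) (c : ℕ → ℕ) : ℕ → ℕ
  | 0 => 1
  | (n+1) => ∑ i ∈ Finset.Icc 1 t,
      if _h : 1 ≤ i ∧ i ≤ n + 1 then c i * Hseq t c (n + 1 - i) else 0
  decreasing_by omega

/-- `[b_1, …, b_k]` is an allowable block for signature `(c 1, …, c t)`:
`k ≤ t`, `b_i = c i` for `i < k`, and `b_k < c k`. -/
def AllowableBlock (t : ℕ) (c : ℕ → ℕ) (b : List ℕ) : Prop :=
  ∃ k d, 1 ≤ k ∧ k ≤ t ∧ d < c k ∧
    b = ((List.range (k - 1)).map fun j => c (j + 1)) ++ [d]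

/-- A list of coefficients (most significant first) is composed of
allowable blocks. -/
def IsBlockString (t : ℕ) (c : ℕ → ℕ) (s : List ℕ) : Prop :=
  ∃ L : List (List ℕ), (∀ b ∈ L, AllowableBlock t c b) ∧ L.flatten = s

/-- The integer represented by a coefficient list `s = [r_m, …, r_0]`
(most significant first): `∑ r_i H_i`. -/
def listVal (t : ℕ) (c : ℕ → ℕ) (s : List ℕ) : ℕ :=
  ∑ k ∈ Finset.range s.length, s.getD k 0 * Hseq t c (s.length - 1 - k)

namespace ZeckAux
set_option linter.unusedSectionVars false

open Finset

variable {t : ℕ} {c : ℕ → ℕ}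

lemma H_zero : Hseq t c 0 = 1 := by rw [Hseq]

lemma H_eq (ν : ℕ) (hν : 1 ≤ ν) :
    Hseq t c ν = ∑ i ∈ Ioc 0 (min t ν), c i * Hseq t c (ν - i) := by
  obtain ⟨n, rfl⟩ := Nat.exists_eq_add_of_le hν
  rw [show 1 + n = n + 1 by omega]
  rw [Hseq]
  rw [← Finset.sum_subset (s₁ := Ioc 0 (min t (n+1))) (s₂ := Icc 1 t)]
  · apply Finset.sum_congr rfl
    intro i hi
    simp only [mem_Ioc] at hi
    rw [dif_pos ⟨by omega, by omega⟩]
  · intro x hx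
    simp only [mem_Ioc, mem_Icc] at *
    omega
  · intro x hx hnx
    simp only [mem_Ioc, mem_Icc] at *
    rw [dif_neg]
    omega

section Basic

variable (ht : 1 ≤ t) (hmono : ∀ i j, 1 ≤ i → i ≤ j → j ≤ t → c j ≤ c i) (hct : 1 ≤ c t)

include ht hmono hct

lemma c_pos (i : ℕ) (h1 : 1 ≤ i) (h2 : i ≤ t) : 1 ≤ c i :=
  le_trans hct (hmono i t h1 h2 le_rfl)

lemma H_pos : ∀ n, 1 ≤ Hseq t c n := by
  intro n
  induction n using Nat.strong_induction_on with
  | _ n ih =>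
    match n with
    | 0 => rw [H_zero]
    | n+1 =>
      rw [H_eq (n+1) (by omega)]
      calc 1 ≤ c 1 * Hseq t c (n+1-1) := by
              have := c_pos ht hmono hct 1 le_rfl ht
              have := ih n (by omega)
              simp only [Nat.add_sub_cancel]
              nlinarith
        _ ≤ _ := Finset.single_le_sum (f := fun i => c i * Hseq t c (n+1-i))
              (by intro i _; positivity) (by simp [mem_Ioc]; omega)

lemma H_mono_succ (n : ℕ) : Hseq t c n ≤ Hseq t c (n+1) := by
  rw [H_eq (n+1) (by omega)]
  calc Hseq t c n ≤ c 1 * Hseq t c (n+1-1) := by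
        have := c_pos ht hmono hct 1 le_rfl ht
        simp only [Nat.add_sub_cancel]
        nlinarith
    _ ≤ _ := Finset.single_le_sum (f := fun i => c i * Hseq t c (n+1-i))
          (by intro i _; positivity) (by simp [mem_Ioc]; omega)

lemma H_mono {a b : ℕ} (h : a ≤ b) : Hseq t c a ≤ Hseq t c b := by
  induction b with
  | zero => simp_all
  | succ n ih =>
    rcases Nat.lt_or_ge a (n+1) with h'|h'
    · exact le_trans (ih (by omega)) (H_mono_succ ht hmono hct n)
    · have : a = n+1 := by omega
      subst this; exact le_rfl

end Basic

section NonDeg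

variable (ht : 1 ≤ t) (hmono : ∀ i j, 1 ≤ i → i ≤ j → j ≤ t → c j ≤ c i) (hct : 1 ≤ c t)
variable (hnd : 2 ≤ t ∨ 2 ≤ c 1)

include ht hmono hct hnd

lemma H_strict (n : ℕ) (hn : 1 ≤ n) : Hseq t c n < Hseq t c (n+1) := by
  rcases hnd with h2 | h2
  · -- t ≥ 2 : use terms i = 1 and i = 2
    rw [H_eq (n+1) (by omega)]
    have hsub : ({1, 2} : Finset ℕ) ⊆ Ioc 0 (min t (n+1)) := by
      intro x hx; simp only [mem_insert, mem_singleton] at hx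
      simp only [mem_Ioc]; omega
    calc Hseq t c n < c 1 * Hseq t c (n+1-1) + c 2 * Hseq t c (n+1-2) := by
            have h1 := c_pos ht hmono hct 1 le_rfl ht
            have hh2 := c_pos ht hmono hct 2 (by omega) h2
            have := H_pos ht hmono hct (n+1-2)
            have := H_pos ht hmono hct n
            simp only [Nat.add_sub_cancel]
            nlinarith
      _ = ∑ i ∈ {1, 2}, c i * Hseq t c (n+1-i) := by
            rw [Finset.sum_insert (by simp), Finset.sum_singleton]
      _ ≤ _ := Finset.sum_le_sum_of_subset hsub
  · rw [H_eq (n+1) (by omega)]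
    calc Hseq t c n < c 1 * Hseq t c (n+1-1) := by
          have := H_pos ht hmono hct n
          simp only [Nat.add_sub_cancel]
          nlinarith
      _ ≤ _ := Finset.single_le_sum (f := fun i => c i * Hseq t c (n+1-i))
            (by intro i _; positivity) (by simp [mem_Ioc]; omega)

lemma le_H (n : ℕ) : n ≤ Hseq t c n := by
  induction n with
  | zero => omega
  | succ n ih =>
    rcases Nat.eq_zero_or_pos n with rfl | hn
    · exact H_pos ht hmono hct 1
    · have := H_strict ht hmono hct hnd n hn
      omega

end NonDeg


def valW (W : ℕ → ℕ) (B : ℕ) (g : ℕ → ℕ) : ℕ := ∑ i ∈ Finset.range B, g i * W i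

lemma valW_key (W : ℕ → ℕ) (B : ℕ) (g p q : ℕ → ℕ) (h : ∀ x, p x ≤ g x) :
    valW W B (fun x => g x - p x + q x) + valW W B p = valW W B g + valW W B q := by
  unfold valW
  rw [← Finset.sum_add_distrib, ← Finset.sum_add_distrib]
  refine Finset.sum_congr rfl fun x _ => ?_
  rw [← add_mul, ← add_mul]
  have := h x
  congr 1
  dsimp only
  omega

lemma valW_mono (W : ℕ → ℕ) (B : ℕ) (g₁ g₂ : ℕ → ℕ) (h : ∀ x, g₁ x ≤ g₂ x) :
    valW W B g₁ ≤ valW W B g₂ :=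
  Finset.sum_le_sum fun x _ => Nat.mul_le_mul_right _ (h x)

lemma valW_add (W : ℕ → ℕ) (B : ℕ) (q₁ q₂ : ℕ → ℕ) :
    valW W B (fun x => q₁ x + q₂ x) = valW W B q₁ + valW W B q₂ := by
  unfold valW
  rw [← Finset.sum_add_distrib]
  exact Finset.sum_congr rfl fun x _ => add_mul _ _ _

def sing (ν a : ℕ) : ℕ → ℕ := fun x => if x = ν then a else 0

lemma valW_sing (W : ℕ → ℕ) (B ν a : ℕ) (h : ν < B) :
    valW W B (sing ν a) = a * W ν := by
  unfold valW sing
  calc ∑ x ∈ range B, (if x = ν then a else 0) * W x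
      = ∑ x ∈ range B, (if x = ν then a * W x else 0) := by
        refine Finset.sum_congr rfl fun x _ => ?_
        split <;> simp
    _ = _ := by rw [Finset.sum_ite_eq' (range B) ν (fun x => a * W x), if_pos (mem_range.2 h)]

def pat (s : Finset ℕ) (ν : ℕ) (amt : ℕ → ℕ) : ℕ → ℕ := fun x =>
  ∑ i ∈ s, if x = ν - i then amt i else 0

lemma valW_pat (W : ℕ → ℕ) (B : ℕ) (s : Finset ℕ) (ν : ℕ) (amt : ℕ → ℕ)
    (hs : ∀ i ∈ s, 1 ≤ i ∧ i ≤ ν) (hB : ν ≤ B) :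
    valW W B (pat s ν amt) = ∑ i ∈ s, amt i * W (ν - i) := by
  unfold valW pat
  calc ∑ x ∈ range B, (∑ i ∈ s, if x = ν - i then amt i else 0) * W x
      = ∑ x ∈ range B, ∑ i ∈ s, (if x = ν - i then amt i * W x else 0) := by
        refine Finset.sum_congr rfl fun x _ => ?_
        rw [Finset.sum_mul]
        refine Finset.sum_congr rfl fun i _ => ?_
        split <;> simp
    _ = ∑ i ∈ s, ∑ x ∈ range B, (if x = ν - i then amt i * W x else 0) := Finset.sum_comm
    _ = _ := by
        refine Finset.sum_congr rfl fun i hi => ?_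
        rw [Finset.sum_ite_eq' (range B) (ν - i) (fun x => amt i * W x), if_pos]
        have := hs i hi
        exact mem_range.2 (by omega)

lemma pat_le (s : Finset ℕ) (ν : ℕ) (amt g : ℕ → ℕ)
    (hs : ∀ i ∈ s, 1 ≤ i ∧ i ≤ ν) (hle : ∀ i ∈ s, amt i ≤ g (ν - i)) :
    ∀ x, pat s ν amt x ≤ g x := by
  intro x
  unfold pat
  by_cases hx : ∃ i ∈ s, x = ν - i
  · obtain ⟨i₀, hi₀s, rfl⟩ := hx
    calc ∑ i ∈ s, (if ν - i₀ = ν - i then amt i else 0)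
        = ∑ i ∈ s, (if i = i₀ then amt i else 0) := by
          refine Finset.sum_congr rfl fun i hi => ?_
          have h1 := hs i hi
          have h2 := hs i₀ hi₀s
          by_cases h : i = i₀
          · subst h; simp
          · rw [if_neg (by omega), if_neg h]
      _ = amt i₀ := by rw [Finset.sum_ite_eq' s i₀ amt, if_pos hi₀s]
      _ ≤ g (ν - i₀) := hle i₀ hi₀s
  · push_neg at hx
    have : ∑ i ∈ s, (if x = ν - i then amt i else 0) = 0 := by
      refine Finset.sum_eq_zero fun i hi => if_neg (hx i hi)
    omega

lemma pat_zero (s : Finset ℕ) (ν : ℕ) (amt : ℕ → ℕ)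
    (hs : ∀ i ∈ s, 1 ≤ i ∧ i ≤ ν) (x : ℕ) (hx : ν ≤ x) : pat s ν amt x = 0 := by
  unfold pat
  refine Finset.sum_eq_zero fun i hi => if_neg ?_
  have := hs i hi
  omega

lemma geom (M : ℕ) : ∀ n, (∑ x ∈ range n, M * (M+1)^x) + 1 = (M+1)^n := by
  intro n
  induction n with
  | zero => simp
  | succ n ih =>
    rw [Finset.sum_range_succ, pow_succ]
    nlinarith [ih]

lemma sum_Ioc_shift (j n : ℕ) (f : ℕ → ℕ) :
    ∑ i ∈ Ioc j (j + n), f (i - j) = ∑ ℓ ∈ Ioc 0 n, f ℓ := by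
  induction n with
  | zero => simp
  | succ n ih =>
    rw [show j + (n+1) = (j+n)+1 by omega, Finset.sum_Ioc_succ_top (by omega) (fun i => f (i - j)),
      Finset.sum_Ioc_succ_top (by omega) f, ih, show j + n + 1 - j = n + 1 by omega]


section Step

variable {t : ℕ} {c : ℕ → ℕ}

def GoodAt (t : ℕ) (c : ℕ → ℕ) (g : ℕ → ℕ) (ν : ℕ) : Prop :=
  ∃ j, 1 ≤ j ∧ j ≤ min t ν ∧ (∀ i, 1 ≤ i → i < j → g (ν - i) = c i) ∧ g (ν - j) < c j

lemma bad_cases (g : ℕ → ℕ) (ν : ℕ) (hbad : ¬ GoodAt t c g ν) :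
    (∀ i, 1 ≤ i → i ≤ min t ν → c i ≤ g (ν - i)) ∨
    (∃ j, 1 ≤ j ∧ j < min t ν ∧ (∀ i, 1 ≤ i → i < j → g (ν - i) = c i) ∧ c j < g (ν - j)) := by
  classical
  by_cases hall : ∀ i, 1 ≤ i → i ≤ min t ν → c i ≤ g (ν - i)
  · exact Or.inl hall
  push_neg at hall
  obtain ⟨i₀, hi₀1, hi₀2, hi₀3⟩ := hall
  right
  have hex : ∃ j, 1 ≤ j ∧ j ≤ min t ν ∧ g (ν - j) ≠ c j := ⟨i₀, hi₀1, hi₀2, by omega⟩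
  obtain ⟨hj1, hj2, hj3⟩ := Nat.find_spec hex
  set j := Nat.find hex with hjdef
  have hpre : ∀ i, 1 ≤ i → i < j → g (ν - i) = c i := by
    intro i h1 h2
    have hmin := Nat.find_min hex h2
    push_neg at hmin
    exact hmin h1 (by omega)
  have hgt : c j < g (ν - j) := by
    rcases Nat.lt_or_ge (g (ν - j)) (c j) with h | h
    · exact absurd ⟨j, hj1, hj2, hpre, h⟩ hbad
    · omega
  have hjlt : j < min t ν := by
    have hji : j ≤ i₀ := Nat.find_min' hex ⟨hi₀1, hi₀2, by omega⟩
    rcases Nat.lt_or_ge j i₀ with h | h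
    · omega
    · have heq : j = i₀ := by omega
      rw [heq] at hgt
      omega
  exact ⟨j, hj1, hjlt, hpre, hgt⟩

variable (ht : 1 ≤ t) (hmono : ∀ i j, 1 ≤ i → i ≤ j → j ≤ t → c j ≤ c i) (hct : 1 ≤ c t)
variable (hnd : 2 ≤ t ∨ 2 ≤ c 1)

include ht hmono hct hnd

lemma step_core (m ν : ℕ) (hνm : ν ≤ m) (g p q : ℕ → ℕ)
    (hple : ∀ x, p x ≤ g x)
    (hpz : ∀ x, ν ≤ x → p x = 0)
    (hqz : ∀ x, m < x → q x = 0)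
    (hgB : ∀ i, m < i → g i = 0)
    (hgm : ∀ x, g x ≤ m)
    (hvpq : valW (Hseq t c) (m+1) p = valW (Hseq t c) (m+1) q)
    (hval : valW (Hseq t c) (m+1) g = m)
    (hwt : valW (fun _ => 1) (m+1) q ≤ valW (fun _ => 1) (m+1) p)
    (hqφ : (m+1)^ν ≤ valW (fun i => (m+1)^i) (m+1) q) :
    ∃ g', (∀ i, m < i → g' i = 0) ∧ valW (Hseq t c) (m+1) g' = m ∧
      valW (fun _ => 1) (m+1) g' ≤ valW (fun _ => 1) (m+1) g ∧
      valW (fun i => (m+1)^i) (m+1) g + 1 ≤ valW (fun i => (m+1)^i) (m+1) g' := by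
  refine ⟨fun x => g x - p x + q x, ?_, ?_, ?_, ?_⟩
  · intro i hi
    have h1 := hple i
    have h2 := hgB i hi
    have h3 := hqz i hi
    dsimp only
    omega
  · have hk := valW_key (Hseq t c) (m+1) g p q hple
    omega
  · have hk := valW_key (fun _ => 1) (m+1) g p q hple
    omega
  · have hk := valW_key (fun i => (m+1)^i) (m+1) g p q hple
    have hφp : valW (fun i => (m+1)^i) (m+1) p + 1 ≤ (m+1)^ν := by
      have h1 : ∑ x ∈ Finset.range ν, p x * (m+1)^x = valW (fun i => (m+1)^i) (m+1) p := by
        refine Finset.sum_subset (Finset.range_subset_range.2 (by omega)) ?_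
        intro x _ hx
        rw [hpz x (by simpa using hx)]
        simp
      have h2 : ∑ x ∈ Finset.range ν, p x * (m+1)^x ≤ ∑ x ∈ Finset.range ν, m * (m+1)^x := by
        refine Finset.sum_le_sum fun x _ => Nat.mul_le_mul_right _ ?_
        exact le_trans (hple x) (hgm x)
      have h3 := geom m ν
      omega
    omega

end Step


def amtP (c : ℕ → ℕ) (j : ℕ) : ℕ → ℕ := fun i => if i = j then c j + 1 else c i

def amtQ (t : ℕ) (c : ℕ → ℕ) (j : ℕ) : ℕ → ℕ :=
  fun i => c (i - j) - (if i ≤ t then c i else 0)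

section StepB

variable {t : ℕ} {c : ℕ → ℕ}
variable (ht : 1 ≤ t) (hmono : ∀ i j, 1 ≤ i → i ≤ j → j ≤ t → c j ≤ c i) (hct : 1 ≤ c t)

include hmono in
lemma evalQpat (W : ℕ → ℕ) (ν j : ℕ) (hj1 : 1 ≤ j) (hjw : j < min t ν) :
    (∑ i ∈ Finset.Ioc j (j + min t (ν - j)), amtQ t c j i * W (ν - i))
      + ∑ i ∈ Finset.Ioc j (min t ν), c i * W (ν - i)
      = ∑ ℓ ∈ Finset.Ioc 0 (min t (ν - j)), c ℓ * W (ν - j - ℓ) := by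
  have h1 : ∀ i ∈ Finset.Ioc j (j + min t (ν - j)),
      (if i ≤ t then c i else 0) * W (ν - i) ≤ c (i - j) * W (ν - i) := by
    intro i hi; rw [Finset.mem_Ioc] at hi
    by_cases h : i ≤ t
    · rw [if_pos h]
      exact Nat.mul_le_mul_right _ (hmono (i - j) i (by omega) (by omega) h)
    · rw [if_neg h, zero_mul]; exact Nat.zero_le _
  have h2 : ∑ i ∈ Finset.Ioc j (j + min t (ν-j)), amtQ t c j i * W (ν - i)
      = (∑ i ∈ Finset.Ioc j (j + min t (ν-j)), c (i - j) * W (ν - i))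
        - ∑ i ∈ Finset.Ioc j (j + min t (ν-j)), (if i ≤ t then c i else 0) * W (ν - i) := by
    rw [← Finset.sum_tsub_distrib _ h1]
    refine Finset.sum_congr rfl fun i hi => ?_
    unfold amtQ
    exact Nat.sub_mul _ _ _
  have h3 : ∑ i ∈ Finset.Ioc j (j + min t (ν-j)), c (i - j) * W (ν - i)
      = ∑ ℓ ∈ Finset.Ioc 0 (min t (ν-j)), c ℓ * W (ν - j - ℓ) := by
    rw [← sum_Ioc_shift j (min t (ν-j)) (fun ℓ => c ℓ * W (ν - j - ℓ))]
    refine Finset.sum_congr rfl fun i hi => ?_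
    rw [Finset.mem_Ioc] at hi
    rw [show ν - j - (i - j) = ν - i by omega]
  have h4 : ∑ i ∈ Finset.Ioc j (j + min t (ν-j)), (if i ≤ t then c i else 0) * W (ν - i)
      = ∑ i ∈ Finset.Ioc j (min t ν), c i * W (ν - i) := by
    rw [← Finset.sum_subset (Finset.Ioc_subset_Ioc le_rfl (by omega : min t ν ≤ j + min t (ν - j)))]
    · refine Finset.sum_congr rfl fun i hi => ?_
      rw [Finset.mem_Ioc] at hi
      rw [if_pos (by omega)]
    · intro x hx hnx
      rw [Finset.mem_Ioc] at hx
      simp only [Finset.mem_Ioc, not_and, not_le] at hnx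
      rw [if_neg (by omega), zero_mul]
  have h5 := Finset.sum_le_sum h1
  omega

include ht hmono in
lemma evalP (W : ℕ → ℕ) (ν j : ℕ) (hj1 : 1 ≤ j) (hjν : j ≤ ν) (B : ℕ) (hB : ν ≤ B) :
    valW W B (pat (Finset.Ioc 0 j) ν (amtP c j))
      = (∑ i ∈ Finset.Ioc 0 (j-1), c i * W (ν - i)) + (c j * W (ν - j) + W (ν - j)) := by
  have hsP : ∀ i ∈ Finset.Ioc 0 j, 1 ≤ i ∧ i ≤ ν := by
    intro i hi; rw [Finset.mem_Ioc] at hi; omega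
  rw [valW_pat _ _ _ _ _ hsP hB]
  rw [show j = (j-1)+1 by omega, Finset.sum_Ioc_succ_top (Nat.zero_le _)]
  rw [show j - 1 + 1 = j by omega]
  congr 1
  · refine Finset.sum_congr rfl fun i hi => ?_
    rw [Finset.mem_Ioc] at hi
    unfold amtP
    rw [if_neg (by omega)]
  · unfold amtP
    rw [if_pos rfl]
    ring

end StepB


section StepMain

variable {t : ℕ} {c : ℕ → ℕ}
variable (ht : 1 ≤ t) (hmono : ∀ i j, 1 ≤ i → i ≤ j → j ≤ t → c j ≤ c i) (hct : 1 ≤ c t)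
variable (hnd : 2 ≤ t ∨ 2 ≤ c 1)

include ht hmono hct hnd

lemma step (m ν : ℕ) (hν : 1 ≤ ν) (hνm1 : ν ≤ m + 1) (g : ℕ → ℕ)
    (hgB : ∀ i, m < i → g i = 0) (hval : valW (Hseq t c) (m+1) g = m)
    (hbad : ¬ GoodAt t c g ν) :
    ∃ g', (∀ i, m < i → g' i = 0) ∧ valW (Hseq t c) (m+1) g' = m ∧
      valW (fun _ => 1) (m+1) g' ≤ valW (fun _ => 1) (m+1) g ∧
      valW (fun i => (m+1)^i) (m+1) g + 1 ≤ valW (fun i => (m+1)^i) (m+1) g' := by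
  have hgm : ∀ x, g x ≤ m := by
    intro x
    rcases Nat.lt_or_ge x (m+1) with h | h
    · have h1 : g x * Hseq t c x ≤ m := by
        rw [← hval]
        exact Finset.single_le_sum (f := fun i => g i * Hseq t c i)
          (fun i _ => Nat.zero_le _) (Finset.mem_range.2 h)
      have h2 := H_pos ht hmono hct x
      nlinarith
    · rw [hgB x (by omega)]; omega
  rcases bad_cases g ν hbad with hA | ⟨j, hj1, hjw, hpre, hgt⟩
  · -- Case A : full carry
    have hs : ∀ i ∈ Finset.Ioc 0 (min t ν), 1 ≤ i ∧ i ≤ ν := by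
      intro i hi; rw [Finset.mem_Ioc] at hi; omega
    have hple : ∀ x, pat (Finset.Ioc 0 (min t ν)) ν c x ≤ g x :=
      pat_le _ _ _ g hs (fun i hi => by
        rw [Finset.mem_Ioc] at hi
        exact hA i (by omega) hi.2)
    have hvp : valW (Hseq t c) (m+1) (pat (Finset.Ioc 0 (min t ν)) ν c) = Hseq t c ν := by
      rw [valW_pat _ _ _ _ _ hs (by omega)]
      exact (H_eq ν hν).symm
    have hHν : Hseq t c ν ≤ m := by
      have h1 := valW_mono (Hseq t c) (m+1) _ g hple
      rw [hvp, hval] at h1; exact h1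
    have hνm : ν ≤ m := le_trans (le_H ht hmono hct hnd ν) hHν
    refine step_core ht hmono hct hnd m ν hνm g _ (sing ν 1) hple (pat_zero _ _ _ hs)
      ?_ hgB hgm ?_ hval ?_ ?_
    · intro x hx; unfold sing; rw [if_neg (by omega)]
    · rw [hvp, valW_sing _ _ _ _ (by omega), one_mul]
    · rw [valW_sing _ _ _ _ (by omega), valW_pat _ _ _ _ _ hs (by omega), one_mul]
      calc 1 ≤ c 1 * 1 := by have := c_pos ht hmono hct 1 le_rfl ht; omega
        _ ≤ ∑ i ∈ Finset.Ioc 0 (min t ν), c i * 1 :=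
            Finset.single_le_sum (f := fun i => c i * 1) (fun i _ => Nat.zero_le _)
              (by rw [Finset.mem_Ioc]; omega)
    · rw [valW_sing _ _ _ _ (by omega), one_mul]
  · -- Case B
    have hμ1 : 1 ≤ ν - j := by omega
    have hsP : ∀ i ∈ Finset.Ioc 0 j, 1 ≤ i ∧ i ≤ ν := by
      intro i hi; rw [Finset.mem_Ioc] at hi; omega
    have hsQ : ∀ i ∈ Finset.Ioc j (j + min t (ν - j)), 1 ≤ i ∧ i ≤ ν := by
      intro i hi; rw [Finset.mem_Ioc] at hi; omega
    have hple : ∀ x, pat (Finset.Ioc 0 j) ν (amtP c j) x ≤ g x := by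
      refine pat_le _ _ _ g hsP fun i hi => ?_
      rw [Finset.mem_Ioc] at hi
      unfold amtP
      by_cases h : i = j
      · rw [if_pos h, h]; omega
      · rw [if_neg h]
        rw [hpre i (by omega) (by omega)]
    -- value computations
    have hPH := evalP ht hmono (Hseq t c) ν j hj1 (by omega) (m+1) (by omega)
    have hQH := evalQpat hmono (Hseq t c) ν j hj1 hjw
    have hHμ := H_eq (t := t) (c := c) (ν - j) hμ1
    have hSmu : ∑ i ∈ Finset.Ioc j (min t ν), c i * Hseq t c (ν - i) ≤ Hseq t c (ν - j) := by
      omega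
    have hHsplit : Hseq t c ν
        = (∑ i ∈ Finset.Ioc 0 (j-1), c i * Hseq t c (ν - i)) + c j * Hseq t c (ν - j)
          + ∑ i ∈ Finset.Ioc j (min t ν), c i * Hseq t c (ν - i) := by
      rw [H_eq ν hν]
      rw [← Finset.sum_Ioc_consecutive _ (Nat.zero_le j) (by omega : j ≤ min t ν)]
      congr 1
      rw [show j = (j-1)+1 by omega, Finset.sum_Ioc_succ_top (Nat.zero_le _)]
      rw [show j - 1 + 1 = j by omega]
    have hvp : Hseq t c ν ≤ valW (Hseq t c) (m+1) (pat (Finset.Ioc 0 j) ν (amtP c j)) := by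
      rw [hPH]
      omega
    have hHν : Hseq t c ν ≤ m := by
      have h1 := valW_mono (Hseq t c) (m+1) _ g hple
      rw [hval] at h1
      omega
    have hνm : ν ≤ m := le_trans (le_H ht hmono hct hnd ν) hHν
    -- the added pattern q
    set q : ℕ → ℕ := fun x => sing ν 1 x + pat (Finset.Ioc j (j + min t (ν - j))) ν (amtQ t c j) x with hqdef
    have hq_eval : ∀ W : ℕ → ℕ, valW W (m+1) q
        = W ν + ∑ i ∈ Finset.Ioc j (j + min t (ν - j)), amtQ t c j i * W (ν - i) := by
      intro W
      rw [hqdef, valW_add, valW_sing _ _ _ _ (by omega), valW_pat _ _ _ _ _ hsQ (by omega), one_mul]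
    refine step_core ht hmono hct hnd m ν hνm g _ q hple (pat_zero _ _ _ hsP)
      ?_ hgB hgm ?_ hval ?_ ?_
    · intro x hx
      rw [hqdef]
      have h1 : sing ν 1 x = 0 := by unfold sing; rw [if_neg (by omega)]
      have h2 := pat_zero _ _ (amtQ t c j) hsQ x (by omega)
      dsimp only
      omega
    · -- value preservation
      rw [hq_eval (Hseq t c), hPH]
      omega
    · -- weight
      rw [hq_eval (fun _ => 1), evalP ht hmono (fun _ => 1) ν j hj1 (by omega) (m+1) (by omega)]
      have hQ1 := evalQpat hmono (fun _ => 1) ν j hj1 hjw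
      simp only [mul_one] at hQ1 ⊢
      have hsub : ∑ ℓ ∈ Finset.Ioc 0 (min t (ν - j)), c ℓ
          ≤ ∑ ℓ ∈ Finset.Ioc 0 (min t ν), c ℓ :=
        Finset.sum_le_sum_of_subset (Finset.Ioc_subset_Ioc le_rfl (by omega))
      have hsplit1 : ∑ ℓ ∈ Finset.Ioc 0 (min t ν), c ℓ
          = (∑ i ∈ Finset.Ioc 0 (j-1), c i) + c j
            + ∑ i ∈ Finset.Ioc j (min t ν), c i := by
        rw [← Finset.sum_Ioc_consecutive _ (Nat.zero_le j) (by omega : j ≤ min t ν)]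
        congr 1
        rw [show j = (j-1)+1 by omega, Finset.sum_Ioc_succ_top (Nat.zero_le _)]
        rw [show j - 1 + 1 = j by omega]
      omega
    · -- Φ increase
      rw [hq_eval (fun i => (m+1)^i)]
      omega

end StepMain


section Reduce

variable {t : ℕ} {c : ℕ → ℕ}
variable (ht : 1 ≤ t) (hmono : ∀ i j, 1 ≤ i → i ≤ j → j ≤ t → c j ≤ c i) (hct : 1 ≤ c t)
variable (hnd : 2 ≤ t ∨ 2 ≤ c 1)

include ht hmono hct

lemma digit_le (m : ℕ) (g : ℕ → ℕ) (hgB : ∀ i, m < i → g i = 0)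
    (hval : valW (Hseq t c) (m+1) g = m) : ∀ x, g x ≤ m := by
  intro x
  rcases Nat.lt_or_ge x (m+1) with h | h
  · have h1 : g x * Hseq t c x ≤ m := by
      rw [← hval]
      exact Finset.single_le_sum (f := fun i => g i * Hseq t c i)
        (fun i _ => Nat.zero_le _) (Finset.mem_range.2 h)
    have h2 := H_pos ht hmono hct x
    nlinarith
  · rw [hgB x (by omega)]; omega

include hnd in
lemma reduce (m : ℕ) : ∀ fuel (g : ℕ → ℕ), (∀ i, m < i → g i = 0) →
    valW (Hseq t c) (m+1) g = m →
    (m+1)^(m+1) ≤ valW (fun i => (m+1)^i) (m+1) g + fuel →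
    ∃ g', (∀ i, m < i → g' i = 0) ∧ valW (Hseq t c) (m+1) g' = m ∧
      valW (fun _ => 1) (m+1) g' ≤ valW (fun _ => 1) (m+1) g ∧
      ∀ ν, 1 ≤ ν → GoodAt t c g' ν := by
  intro fuel
  induction fuel with
  | zero =>
    intro g hgB hval hΦ
    exfalso
    have hgm := digit_le ht hmono hct m g hgB hval
    have h1 : valW (fun i => (m+1)^i) (m+1) g ≤ ∑ x ∈ Finset.range (m+1), m * (m+1)^x :=
      Finset.sum_le_sum fun x _ => Nat.mul_le_mul_right _ (hgm x)
    have h2 := geom m (m+1)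
    omega
  | succ fuel ih =>
    intro g hgB hval hΦ
    by_cases hgood : ∀ ν, 1 ≤ ν → ν ≤ m + 1 → GoodAt t c g ν
    · refine ⟨g, hgB, hval, le_rfl, ?_⟩
      intro ν hν
      rcases le_or_gt ν (m+1) with h | h
      · exact hgood ν hν h
      · refine ⟨1, le_rfl, by omega, by omega, ?_⟩
        rw [hgB (ν - 1) (by omega)]
        exact c_pos ht hmono hct 1 le_rfl ht
    · push_neg at hgood
      obtain ⟨ν, hν1, hνm1, hbad⟩ := hgood
      obtain ⟨g', h1, h2, h3, h4⟩ := step ht hmono hct hnd m ν hν1 hνm1 g hgB hval hbad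
      obtain ⟨g'', k1, k2, k3, k4⟩ := ih g' h1 h2 (by omega)
      exact ⟨g'', k1, k2, le_trans k3 h3, k4⟩

end Reduce


section Lists

variable {t : ℕ} {c : ℕ → ℕ}

def blockOf (c : ℕ → ℕ) (k d : ℕ) : List ℕ :=
  ((List.range (k - 1)).map fun j => c (j + 1)) ++ [d]

lemma blockOf_length (k d : ℕ) (hk : 1 ≤ k) : (blockOf c k d).length = k := by
  simp only [blockOf, List.length_append, List.length_map, List.length_range,
    List.length_singleton]
  omega

lemma listVal_cons (a : ℕ) (s : List ℕ) :
    listVal t c (a :: s) = a * Hseq t c s.length + listVal t c s := by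
  unfold listVal
  rw [List.length_cons, Finset.sum_range_succ']
  have h1 : ∀ i ∈ Finset.range s.length,
      (a :: s).getD (i+1) 0 * Hseq t c (s.length + 1 - 1 - (i+1))
        = s.getD i 0 * Hseq t c (s.length - 1 - i) := by
    intro i _
    rw [List.getD_cons_succ]
    congr 2
    omega
  rw [Finset.sum_congr rfl h1, List.getD_cons_zero,
    show s.length + 1 - 1 - 0 = s.length by omega]
  ring

lemma listVal_replicate_zero (k : ℕ) (s : List ℕ) :
    listVal t c (List.replicate k 0 ++ s) = listVal t c s := by
  induction k with
  | zero => simp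
  | succ n ih =>
    rw [List.replicate_succ, List.cons_append, listVal_cons, ih]
    simp

lemma listVal_maprange (n : ℕ) (w : List ℕ) :
    listVal t c (((List.range n).map fun j => c (j + 1)) ++ w)
      = (∑ i ∈ Finset.Ioc 0 n, c i * Hseq t c (n - i + w.length)) + listVal t c w := by
  induction n generalizing w with
  | zero => simp
  | succ n ih =>
    rw [List.range_succ, List.map_append, List.append_assoc]
    rw [ih]
    simp only [List.map_cons, List.map_nil, List.singleton_append, List.length_cons]
    rw [listVal_cons]
    rw [Finset.sum_Ioc_succ_top (Nat.zero_le _)]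
    have h1 : ∀ i ∈ Finset.Ioc 0 n, c i * Hseq t c (n - i + (w.length + 1))
        = c i * Hseq t c (n + 1 - i + w.length) := by
      intro i hi
      rw [Finset.mem_Ioc] at hi
      congr 2
      omega
    rw [Finset.sum_congr rfl h1]
    rw [show n + 1 - (n + 1) + w.length = w.length by omega]
    ring

lemma listVal_block (k d : ℕ) (hk : 1 ≤ k) (v : List ℕ) :
    listVal t c (blockOf c k d ++ v)
      = ((∑ i ∈ Finset.Ioc 0 (k-1), c i * Hseq t c (k + v.length - i))
        + d * Hseq t c v.length) + listVal t c v := by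
  unfold blockOf
  rw [List.append_assoc, List.singleton_append, listVal_maprange, listVal_cons]
  rw [List.length_cons]
  have h1 : ∀ i ∈ Finset.Ioc 0 (k-1), c i * Hseq t c (k - 1 - i + (v.length + 1))
      = c i * Hseq t c (k + v.length - i) := by
    intro i hi
    rw [Finset.mem_Ioc] at hi
    congr 2
    omega
  rw [Finset.sum_congr rfl h1]
  ring

variable (ht : 1 ≤ t) (hmono : ∀ i j, 1 ≤ i → i ≤ j → j ≤ t → c j ≤ c i) (hct : 1 ≤ c t)

include ht hmono hct in
lemma flatten_val_lt : ∀ L : List (List ℕ), (∀ b ∈ L, AllowableBlock t c b) →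
    listVal t c L.flatten < Hseq t c L.flatten.length := by
  intro L
  induction L with
  | nil => intro _; simp [listVal, H_zero]
  | cons b T ih =>
    intro hall
    obtain ⟨k, d, hk1, hkt, hd, hb⟩ := hall b (by simp)
    replace hb : b = blockOf c k d := hb
    have hT := ih (fun b' hb' => hall b' (by simp [hb']))
    rw [List.flatten_cons, hb]
    rw [listVal_block k d hk1]
    rw [List.length_append, blockOf_length k d hk1]
    set o := T.flatten.length with ho
    have hlen1 : 1 ≤ k + o := by omega
    have hHsplit : Hseq t c (k + o)
        = (∑ i ∈ Finset.Ioc 0 (k-1), c i * Hseq t c (k + o - i)) + c k * Hseq t c o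
          + ∑ i ∈ Finset.Ioc k (min t (k + o)), c i * Hseq t c (k + o - i) := by
      rw [H_eq (k + o) hlen1]
      rw [← Finset.sum_Ioc_consecutive _ (Nat.zero_le k) (by omega : k ≤ min t (k + o))]
      congr 1
      rw [show k = (k-1)+1 by omega, Finset.sum_Ioc_succ_top (Nat.zero_le _)]
      rw [show k - 1 + 1 = k by omega, show k + o - k = o by omega]
    have hd1 : d * Hseq t c o + Hseq t c o ≤ c k * Hseq t c o := by
      have : (d + 1) * Hseq t c o ≤ c k * Hseq t c o :=
        Nat.mul_le_mul_right _ (by omega)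
      nlinarith
    omega

include ht hmono hct in
lemma tile_order (ℓ k₁ d₁ k₂ d₂ : ℕ) (h11 : 1 ≤ k₁) (h1t : k₁ ≤ t) (h1ℓ : k₁ ≤ ℓ)
    (hd1 : d₁ < c k₁) (h21 : 1 ≤ k₂) (h2ℓ : k₂ ≤ ℓ)
    (hlt : k₁ < k₂ ∨ (k₁ = k₂ ∧ d₁ < d₂)) :
    ((∑ i ∈ Finset.Ioc 0 (k₁-1), c i * Hseq t c (ℓ - i)) + d₁ * Hseq t c (ℓ - k₁))
      + Hseq t c (ℓ - k₁)
    ≤ (∑ i ∈ Finset.Ioc 0 (k₂-1), c i * Hseq t c (ℓ - i)) + d₂ * Hseq t c (ℓ - k₂) := by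
  rcases hlt with h | ⟨rfl, h⟩
  · have h1 : d₁ * Hseq t c (ℓ - k₁) + Hseq t c (ℓ - k₁) ≤ c k₁ * Hseq t c (ℓ - k₁) := by
      have : (d₁ + 1) * Hseq t c (ℓ - k₁) ≤ c k₁ * Hseq t c (ℓ - k₁) :=
        Nat.mul_le_mul_right _ (by omega)
      nlinarith
    have h2 : (∑ i ∈ Finset.Ioc 0 (k₁-1), c i * Hseq t c (ℓ - i)) + c k₁ * Hseq t c (ℓ - k₁)
        = ∑ i ∈ Finset.Ioc 0 k₁, c i * Hseq t c (ℓ - i) := by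
      rw [show k₁ = (k₁-1)+1 by omega, Finset.sum_Ioc_succ_top (Nat.zero_le _)]
      rw [show k₁ - 1 + 1 = k₁ by omega]
    have h3 : ∑ i ∈ Finset.Ioc 0 k₁, c i * Hseq t c (ℓ - i)
        ≤ ∑ i ∈ Finset.Ioc 0 (k₂-1), c i * Hseq t c (ℓ - i) :=
      Finset.sum_le_sum_of_subset (Finset.Ioc_subset_Ioc le_rfl (by omega))
    omega
  · have h1 : (d₁ + 1) * Hseq t c (ℓ - k₁) ≤ d₂ * Hseq t c (ℓ - k₁) :=
      Nat.mul_le_mul_right _ (by omega)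
    nlinarith

include ht hmono hct in
lemma unique_core : ∀ n : ℕ, ∀ L₁ L₂ : List (List ℕ),
    (∀ b ∈ L₁, AllowableBlock t c b) → (∀ b ∈ L₂, AllowableBlock t c b) →
    L₁.flatten.length = n → L₂.flatten.length = n →
    listVal t c L₁.flatten = listVal t c L₂.flatten →
    L₁.flatten = L₂.flatten := by
  intro n
  induction n using Nat.strong_induction_on with
  | _ n ih =>
    intro L₁ L₂ hall₁ hall₂ hlen₁ hlen₂ hval
    match L₁, L₂ with
    | [], [] => rfl
    | [], b₂ :: T₂ =>
      exfalso
      obtain ⟨k, d, hk1, hkt, hd, hb⟩ := hall₂ b₂ (by simp)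
      replace hb : b₂ = blockOf c k d := hb
      have : (b₂ :: T₂).flatten.length = 0 := by rw [hlen₂, ← hlen₁]; simp
      rw [List.flatten_cons, List.length_append, hb, blockOf_length k d hk1] at this
      omega
    | b₁ :: T₁, [] =>
      exfalso
      obtain ⟨k, d, hk1, hkt, hd, hb⟩ := hall₁ b₁ (by simp)
      replace hb : b₁ = blockOf c k d := hb
      have : (b₁ :: T₁).flatten.length = 0 := by rw [hlen₁, ← hlen₂]; simp
      rw [List.flatten_cons, List.length_append, hb, blockOf_length k d hk1] at this
      omega
    | b₁ :: T₁, b₂ :: T₂ =>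
      obtain ⟨k₁, d₁, hk11, hk1t, hd1, hb1⟩ := hall₁ b₁ (by simp)
      obtain ⟨k₂, d₂, hk21, hk2t, hd2, hb2⟩ := hall₂ b₂ (by simp)
      replace hb1 : b₁ = blockOf c k₁ d₁ := hb1
      replace hb2 : b₂ = blockOf c k₂ d₂ := hb2
      have hT₁ : ∀ b ∈ T₁, AllowableBlock t c b := fun b hb => hall₁ b (by simp [hb])
      have hT₂ : ∀ b ∈ T₂, AllowableBlock t c b := fun b hb => hall₂ b (by simp [hb])
      have hv₁ := flatten_val_lt ht hmono hct T₁ hT₁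
      have hv₂ := flatten_val_lt ht hmono hct T₂ hT₂
      have hl₁ : k₁ + T₁.flatten.length = n := by
        rw [← hlen₁, List.flatten_cons, List.length_append, hb1, blockOf_length k₁ d₁ hk11]
      have hl₂ : k₂ + T₂.flatten.length = n := by
        rw [← hlen₂, List.flatten_cons, List.length_append, hb2, blockOf_length k₂ d₂ hk21]
      rw [List.flatten_cons, List.flatten_cons, hb1, hb2] at hval ⊢
      rw [listVal_block k₁ d₁ hk11, listVal_block k₂ d₂ hk21] at hval
      rw [show k₁ + T₁.flatten.length = n from hl₁,
        show k₂ + T₂.flatten.length = n from hl₂] at hval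
      rw [show T₁.flatten.length = n - k₁ by omega] at hval hv₁
      rw [show T₂.flatten.length = n - k₂ by omega] at hval hv₂
      have heq : k₁ = k₂ ∧ d₁ = d₂ := by
        rcases Nat.lt_trichotomy k₁ k₂ with hk | hk | hk
        · exfalso
          have := tile_order ht hmono hct n k₁ d₁ k₂ d₂ hk11 hk1t (by omega) hd1 hk21
            (by omega) (Or.inl hk)
          omega
        · rcases Nat.lt_trichotomy d₁ d₂ with hd | hd | hd
          · exfalso
            have := tile_order ht hmono hct n k₁ d₁ k₂ d₂ hk11 hk1t (by omega) hd1 hk21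
              (by omega) (Or.inr ⟨hk, hd⟩)
            omega
          · exact ⟨hk, hd⟩
          · exfalso
            have := tile_order ht hmono hct n k₂ d₂ k₁ d₁ hk21 (by omega) (by omega) hd2 hk11
              (by omega) (Or.inr ⟨hk.symm, hd⟩)
            omega
        · exfalso
          have := tile_order ht hmono hct n k₂ d₂ k₁ d₁ hk21 hk2t (by omega) hd2 hk11
            (by omega) (Or.inl hk)
          omega
      obtain ⟨rfl, rfl⟩ := heq
      have hvT : listVal t c T₁.flatten = listVal t c T₂.flatten := by omega
      have hrec := ih T₁.flatten.length (by omega) T₁ T₂ hT₁ hT₂ rfl (by omega) hvT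
      rw [hrec]
end Lists


section Blockify

variable {t : ℕ} {c : ℕ → ℕ}
variable (ht : 1 ≤ t) (hmono : ∀ i j, 1 ≤ i → i ≤ j → j ≤ t → c j ≤ c i) (hct : 1 ≤ c t)


lemma eq_of_getD (l₁ l₂ : List ℕ) (hl : l₁.length = l₂.length)
    (h : ∀ i, i < l₁.length → l₁.getD i 0 = l₂.getD i 0) : l₁ = l₂ := by
  apply List.ext_getElem hl
  intro i h1 h2
  rw [← List.getD_eq_getElem l₁ 0 h1, ← List.getD_eq_getElem l₂ 0 h2]
  exact h i h1

lemma blockOf_getD (k d i : ℕ) (hk : 1 ≤ k) (hi : i < k) :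
    (blockOf c k d).getD i 0 = if i < k - 1 then c (i + 1) else d := by
  unfold blockOf
  rcases Nat.lt_or_ge i (k-1) with h | h
  · rw [if_pos h, List.getD_append _ _ _ _ (by simpa using h)]
    rw [List.getD_eq_getElem _ _ (by simpa using h)]
    simp
  · rw [if_neg (by omega), List.getD_append_right _ _ _ _ (by simp; omega)]
    simp only [List.length_map, List.length_range]
    rw [show i - (k-1) = 0 by omega]
    rfl

lemma getD_take (l : List ℕ) (j i : ℕ) (hij : i < j) (hi : i < l.length) :
    (l.take j).getD i 0 = l.getD i 0 := by
  rw [List.getD_eq_getElem _ _ (by rw [List.length_take]; omega),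
    List.getD_eq_getElem _ _ hi]
  simp [List.getElem_take]

lemma blockify : ∀ n (u : List ℕ), u.length = n →
    (∀ v : List ℕ, v <:+ u → v ≠ [] → ∃ j, 1 ≤ j ∧ j ≤ min t v.length ∧
      (∀ i, 1 ≤ i → i < j → v.getD (i-1) 0 = c i) ∧ v.getD (j-1) 0 < c j) →
    IsBlockString t c u := by
  intro n
  induction n using Nat.strong_induction_on with
  | _ n ih =>
    intro u hlen hgood
    match u, hlen with
    | [], _ => exact ⟨[], by simp, by simp⟩
    | (a :: u'), hlen =>
      obtain ⟨j, hj1, hjm, hpre, hlt⟩ := hgood (a :: u') (List.suffix_refl _) (by simp)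
      have hjlen : j ≤ (a :: u').length := le_trans hjm (min_le_right _ _)
      have hjt : j ≤ t := le_trans hjm (min_le_left _ _)
      have hballow : AllowableBlock t c (blockOf c j ((a :: u').getD (j-1) 0)) :=
        ⟨j, (a :: u').getD (j-1) 0, hj1, hjt, hlt, rfl⟩
      have hbtake : (a :: u').take j = blockOf c j ((a :: u').getD (j-1) 0) := by
        apply eq_of_getD
        · rw [List.length_take, blockOf_length _ _ hj1]
          omega
        · intro i hi
          rw [List.length_take] at hi
          have hij : i < j := by omega
          rw [getD_take _ _ _ hij (by omega), blockOf_getD _ _ _ hj1 hij]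
          rcases Nat.lt_or_ge i (j-1) with h | h
          · rw [if_pos h]
            have := hpre (i+1) (by omega) (by omega)
            rw [show i + 1 - 1 = i by omega] at this
            exact this
          · rw [if_neg (by omega), show i = j - 1 by omega]
      have hsplit : (a :: u') = blockOf c j ((a :: u').getD (j-1) 0) ++ (a :: u').drop j := by
        rw [← hbtake, List.take_append_drop]
      have hrec : IsBlockString t c ((a :: u').drop j) := by
        refine ih ((a :: u').drop j).length ?_ _ rfl ?_
        · rw [List.length_drop]
          simp only [List.length_cons] at hlen ⊢
          omega
        · intro v hv hvne
          exact hgood v (hv.trans (List.drop_suffix _ _)) hvne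
      obtain ⟨L', hL'a, hL'f⟩ := hrec
      exact ⟨blockOf c j ((a :: u').getD (j-1) 0) :: L', by
        intro b' hb'
        rcases List.mem_cons.1 hb' with rfl | h
        · exact hballow
        · exact hL'a b' h, by rw [List.flatten_cons, hL'f, ← hsplit]⟩

end Blockify


section Final

variable {t : ℕ} {c : ℕ → ℕ}
variable (ht : 1 ≤ t) (hmono : ∀ i j, 1 ≤ i → i ≤ j → j ≤ t → c j ≤ c i) (hct : 1 ≤ c t)

lemma flatten_replicate_zero (k : ℕ) :
    (List.replicate k ([0] : List ℕ)).flatten = List.replicate k (0 : ℕ) := by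
  induction k with
  | zero => simp
  | succ n ih => simp [List.replicate_succ, ih]

include ht hmono hct in
lemma blockstring_sum_eq (s₁ s₂ : List ℕ) (h₁ : IsBlockString t c s₁)
    (h₂ : IsBlockString t c s₂) (hv : listVal t c s₁ = listVal t c s₂) :
    s₁.sum = s₂.sum := by
  suffices haux : ∀ u₁ u₂ : List ℕ, u₁.length ≤ u₂.length → IsBlockString t c u₁ →
      IsBlockString t c u₂ → listVal t c u₁ = listVal t c u₂ → u₁.sum = u₂.sum by
    rcases le_total s₁.length s₂.length with h | h
    · exact haux s₁ s₂ h h₁ h₂ hv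
    · exact (haux s₂ s₁ h h₂ h₁ hv.symm).symm
  intro u₁ u₂ hlen hbs₁ hbs₂ hv
  obtain ⟨L₁, hL₁, hf₁⟩ := hbs₁
  obtain ⟨L₂, hL₂, hf₂⟩ := hbs₂
  have hrep : ∀ b ∈ List.replicate (u₂.length - u₁.length) ([0] : List ℕ),
      AllowableBlock t c b := by
    intro b hb
    rw [List.eq_of_mem_replicate hb]
    exact ⟨1, 0, le_rfl, ht, c_pos ht hmono hct 1 le_rfl ht, by simp⟩
  have hflat : (List.replicate (u₂.length - u₁.length) ([0] : List ℕ) ++ L₁).flatten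
      = List.replicate (u₂.length - u₁.length) (0:ℕ) ++ u₁ := by
    rw [List.flatten_append, flatten_replicate_zero, hf₁]
  have key := unique_core ht hmono hct u₂.length
    (List.replicate (u₂.length - u₁.length) ([0] : List ℕ) ++ L₁) L₂
    (by
      intro b hb
      rcases List.mem_append.1 hb with h | h
      · exact hrep b h
      · exact hL₁ b h)
    hL₂
    (by rw [hflat]; simp; omega)
    (by rw [hf₂])
    (by rw [hflat, hf₂, listVal_replicate_zero, hv])
  rw [hflat, hf₂] at key
  have := congrArg List.sum key
  rw [List.sum_append, List.sum_replicate] at this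
  simpa using this

lemma list_sum_range (f : ℕ → ℕ) (n : ℕ) :
    ((List.range n).map f).sum = ∑ i ∈ Finset.range n, f i := by
  induction n with
  | zero => simp
  | succ n ih => rw [List.range_succ, List.map_append, List.sum_append,
      Finset.sum_range_succ, ih]; simp

end Final


end ZeckAux

open ZeckAux in
/-- If the signature `(c 1, …, c t)` is weakly decreasing with
`c t ≥ 1`, then for every `m` and every representation `r` of `m`, the number
of summands of `r` is at least that of the generalized Zeckendorf
decomposition of `m`. -/
theorem weakly_decreasing_summand_minimal (t : ℕ) (ht : 1 ≤ t) (c : ℕ → ℕ)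
    (hmono : ∀ i j, 1 ≤ i → i ≤ j → j ≤ t → c j ≤ c i) (hct : 1 ≤ c t)
    (m : ℕ) (r : ℕ →₀ ℕ) (hr : (r.sum fun i v => v * Hseq t c i) = m)
    (s : List ℕ) (hs : IsBlockString t c s) (hsval : listVal t c s = m) :
    s.sum ≤ r.sum fun _ v => v := by
  by_cases hnd : 2 ≤ t ∨ 2 ≤ c 1
  · -- non-degenerate case
    have hsupp : ∀ i, m < i → r i = 0 := by
      intro i hi
      by_contra hne
      have hmem : i ∈ r.support := Finsupp.mem_support_iff.2 hne
      have h1 : r i * Hseq t c i ≤ m := by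
        rw [← hr, Finsupp.sum]
        exact Finset.single_le_sum (f := fun a => r a * Hseq t c a)
          (fun a _ => Nat.zero_le _) hmem
      have h2 := le_H ht hmono hct hnd i
      have h3 := H_pos ht hmono hct i
      have h4 : 1 ≤ r i := Nat.one_le_iff_ne_zero.2 hne
      nlinarith
    have hsubset : r.support ⊆ Finset.range (m+1) := by
      intro i hi
      rw [Finset.mem_range]
      by_contra h
      exact (Finsupp.mem_support_iff.1 hi) (hsupp i (by omega))
    have hval : valW (Hseq t c) (m+1) (fun i => r i) = m := by
      have h0 : valW (Hseq t c) (m+1) (fun i => r i) = ∑ a ∈ r.support, r a * Hseq t c a := by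
        show ∑ i ∈ Finset.range (m+1), r i * Hseq t c i = _
        exact (Finset.sum_subset hsubset (f := fun a => r a * Hseq t c a) (fun x _ hx => by
          show r x * Hseq t c x = 0
          rw [Finsupp.notMem_support_iff.1 hx, zero_mul])).symm
      rw [h0, ← hr, Finsupp.sum]
    have hwt : valW (fun _ => 1) (m+1) (fun i => r i) = r.sum (fun _ v => v) := by
      have h0 : valW (fun _ => 1) (m+1) (fun i => r i) = ∑ a ∈ r.support, r a := by
        show ∑ i ∈ Finset.range (m+1), r i * 1 = _
        simp only [mul_one]
        exact (Finset.sum_subset hsubset (f := fun a => r a) (fun x _ hx =>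
          Finsupp.notMem_support_iff.1 hx)).symm
      rw [h0, Finsupp.sum]
    obtain ⟨g', hg'B, hg'val, hg'wt, hg'good⟩ :=
      reduce ht hmono hct hnd m ((m+1)^(m+1)) (fun i => r i) hsupp hval (by omega)
    have hDlen : ((List.range (m+1)).map (fun k' => g' (m - k'))).length = m + 1 := by simp
    have hDgetD : ∀ x, x < m+1 →
        ((List.range (m+1)).map (fun k' => g' (m - k'))).getD x 0 = g' (m - x) := by
      intro x hx
      rw [List.getD_eq_getElem _ _ (by simpa using hx)]
      simp
    have hDval : listVal t c ((List.range (m+1)).map (fun k' => g' (m - k'))) = m := by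
      unfold listVal
      rw [hDlen]
      have h1 : ∀ k ∈ Finset.range (m+1),
          ((List.range (m+1)).map (fun k' => g' (m - k'))).getD k 0
            * Hseq t c (m + 1 - 1 - k)
          = g' (m - k) * Hseq t c (m - k) := by
        intro k hk
        rw [Finset.mem_range] at hk
        rw [hDgetD k hk, show m + 1 - 1 - k = m - k by omega]
      rw [Finset.sum_congr rfl h1]
      have h2 := Finset.sum_range_reflect (fun i => g' i * Hseq t c i) (m+1)
      simp only [show ∀ j, m + 1 - 1 - j = m - j from fun j => by omega] at h2
      rw [h2]
      exact hg'val
    have hDsum : ((List.range (m+1)).map (fun k' => g' (m - k'))).sum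
        = valW (fun _ => 1) (m+1) g' := by
      rw [list_sum_range]
      have h2 := Finset.sum_range_reflect (fun i => g' i) (m+1)
      simp only [show ∀ j, m + 1 - 1 - j = m - j from fun j => by omega] at h2
      rw [h2]
      unfold valW
      simp [mul_one]
    have hDblock : IsBlockString t c ((List.range (m+1)).map (fun k' => g' (m - k'))) := by
      apply blockify _ _ rfl
      intro v hv hvne
      have hvlen : v.length ≤ m + 1 := by
        have := List.IsSuffix.length_le hv
        omega
      have hv1 : 1 ≤ v.length := List.length_pos_iff.2 hvne
      obtain ⟨j, hj1, hjm, hpre, hjlt⟩ := hg'good v.length hv1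
      obtain ⟨w, hw⟩ := hv
      have hWlen : w.length + v.length = m + 1 := by
        have := congrArg List.length hw
        simpa using this
      have hgetD : ∀ x, x < v.length → v.getD x 0 = g' (v.length - 1 - x) := by
        intro x hx
        have h1 : v.getD x 0 = (w ++ v).getD (w.length + x) 0 := by
          rw [List.getD_append_right _ _ _ _ (by omega)]
          congr 1
          omega
        rw [h1, hw, hDgetD _ (by omega)]
        congr 1
        omega
      have hjv : j ≤ v.length := le_trans hjm (min_le_right _ _)
      refine ⟨j, hj1, hjm, ?_, ?_⟩
      · intro i h1 h2
        rw [hgetD (i-1) (by omega), show v.length - 1 - (i-1) = v.length - i by omega]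
        exact hpre i h1 h2
      · rw [hgetD (j-1) (by omega), show v.length - 1 - (j-1) = v.length - j by omega]
        exact hjlt
    have hsum_eq := blockstring_sum_eq ht hmono hct s _ hs hDblock (by rw [hsval, hDval])
    rw [hsum_eq, hDsum, ← hwt]
    exact hg'wt
  · -- degenerate case : t = 1 and c 1 = 1
    push_neg at hnd
    obtain ⟨hnd1, hnd2⟩ := hnd
    have ht1 : t = 1 := by omega
    have hc1 : c 1 = 1 := by
      have : 1 ≤ c 1 := by rw [← ht1] at *; omega
      omega
    obtain ⟨L, hbL, hflat⟩ := hs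
    have hall0 : ∀ b ∈ L, b = [0] := by
      intro b hb
      obtain ⟨k, d, hk1, hkt, hd, hbeq⟩ := hbL b hb
      have hk : k = 1 := by omega
      rw [hk] at hbeq hd
      rw [hc1] at hd
      rw [hbeq]
      simp
      omega
    have hz : ∀ M : List (List ℕ), (∀ b ∈ M, b = [0]) → M.flatten.sum = 0 := by
      intro M
      induction M with
      | nil => simp
      | cons b T ih =>
        intro h
        rw [List.flatten_cons, List.sum_append, h b (by simp),
          ih (fun b' hb' => h b' (by simp [hb']))]
        simp
    rw [← hflat, hz L hall0]
    exact Nat.zero_le _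
end

section
/- Let H = (H_n) satisfy the recurrence H_{n+t} + c_1 H_{n+t-1} + ... + c_t H_n = 0 with c_t ≠ 0, and define the Hankel matrix A_n = (H_{n+i+j})_{0 ≤ i, j ≤ t-1}. Then |det A_{n+1}| = |c_t| · |det A_n| for all n; in particular, if det A_{n_0} ≠ 0 for some n_0, then det A_n ≠ 0 for all n ≥ n_0. -/
/-- If `H` satisfies `H (n+t) + c_1 H (n+t-1) + ⋯ + c_t H n = 0`
with `c t ≠ 0`, and `A_n` is the `t × t` Hankel matrix with entries
`H (n+i+j)`, then `|det A_{n+1}| = |c t| * |det A_n|` for all `n`; in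
particular if `det A_{n₀} ≠ 0` then `det A_n ≠ 0` for all `n ≥ n₀`. -/
theorem hankel_det_ratio (t : ℕ) (ht : 1 ≤ t) (c : ℕ → ℚ) (hct : c t ≠ 0)
    (H : ℕ → ℚ)
    (hrec : ∀ n, H (n + t) + ∑ i ∈ Finset.Icc 1 t, c i * H (n + t - i) = 0) :
    (∀ n, |(Matrix.of fun i j : Fin t => H (n + 1 + (i : ℕ) + j)).det| =
        |c t| * |(Matrix.of fun i j : Fin t => H (n + (i : ℕ) + j)).det|)
    ∧ ∀ n₀, (Matrix.of fun i j : Fin t => H (n₀ + (i : ℕ) + j)).det ≠ 0 →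
        ∀ n, n₀ ≤ n → (Matrix.of fun i j : Fin t => H (n + (i : ℕ) + j)).det ≠ 0 := by
  obtain ⟨s, rfl⟩ : ∃ s, t = s + 1 := ⟨t - 1, (Nat.succ_pred_eq_of_pos ht).symm⟩
  set M : Matrix (Fin (s+1)) (Fin (s+1)) ℚ :=
    Matrix.of (fun i j : Fin (s+1) =>
      if (i : ℕ) < s then (if (j : ℕ) = (i : ℕ) + 1 then 1 else 0) else -c (s + 1 - (j : ℕ)))
    with hM
  have hmul : ∀ n, M * (Matrix.of fun i j : Fin (s+1) => H (n + (i : ℕ) + j))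
      = (Matrix.of fun i j : Fin (s+1) => H (n + 1 + (i : ℕ) + j)) := by
    intro n
    ext i j
    rw [Matrix.mul_apply]
    by_cases hi : (i : ℕ) < s
    · simp only [hM, Matrix.of_apply, hi, if_true]
      rw [Finset.sum_eq_single (⟨(i:ℕ)+1, by omega⟩ : Fin (s+1))]
      · simp only [Matrix.of_apply]
        rw [if_pos trivial, one_mul]
        congr 1; omega
      · intro b _ hb
        have : (b : ℕ) ≠ (i : ℕ) + 1 := by
          intro h; apply hb; ext; simpa using h
        simp [this]
      · simp
    · have hieq : (i : ℕ) = s := by omega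
      simp only [hM, Matrix.of_apply, hi, if_false]
      have h0 := hrec (n + j)
      have key : ∑ k : Fin (s+1), -c (s + 1 - (k : ℕ)) * H (n + (k : ℕ) + j)
          = - ∑ i ∈ Finset.Icc 1 (s+1), c i * H (n + (j:ℕ) + (s + 1) - i) := by
        rw [Fin.sum_univ_eq_sum_range (fun k => -c (s + 1 - k) * H (n + k + (j:ℕ))) (s+1),
          ← Finset.sum_neg_distrib]
        refine Finset.sum_bij' (fun k _ => s + 1 - k) (fun k _ => s + 1 - k) ?_ ?_ ?_ ?_ ?_
        · intro a ha; simp only [Finset.mem_range] at ha; simp only [Finset.mem_Icc]; omega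
        · intro a ha; simp only [Finset.mem_Icc] at ha; simp only [Finset.mem_range]; omega
        · intro a ha; simp only [Finset.mem_range] at ha
          show s + 1 - (s + 1 - a) = a; omega
        · intro a ha; simp only [Finset.mem_Icc] at ha
          show s + 1 - (s + 1 - a) = a; omega
        · intro a ha; simp only [Finset.mem_range] at ha
          have h2 : n + (j:ℕ) + (s + 1) - (s + 1 - a) = n + a + (j:ℕ) := by omega
          show -c (s + 1 - a) * H (n + a + (j:ℕ))
              = -(c (s + 1 - a) * H (n + (j:ℕ) + (s + 1) - (s + 1 - a)))
          rw [h2]; ring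
      rw [key]
      have : H (n + (j:ℕ) + (s+1)) = - ∑ i ∈ Finset.Icc 1 (s+1), c i * H (n + (j:ℕ) + (s + 1) - i) := by
        linarith
      rw [← this]
      congr 1; omega
  have hdetM : M.det = (-1)^(s+1) * c (s+1) := by
    rw [Matrix.det_succ_column_zero]
    rw [Finset.sum_eq_single (Fin.last s)]
    · have hsub : M.submatrix (Fin.last s).succAbove Fin.succ = 1 := by
        ext i j
        simp only [Matrix.submatrix_apply, hM, Matrix.of_apply, Fin.succAbove_last,
          Fin.coe_castSucc]
        have : (i : ℕ) < s := i.isLt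
        simp only [this, if_true, Fin.val_succ]
        by_cases h : i = j
        · subst h; simp [Matrix.one_apply]
        · have : ((j:ℕ)+1 = (i:ℕ)+1) ↔ False := by
            constructor
            · intro hh; apply h; ext; omega
            · intro hh; exact hh.elim
          simp [Matrix.one_apply, this, h, Ne.symm h, Fin.val_inj]
      rw [hsub]
      have : M (Fin.last s) 0 = -c (s+1) := by
        simp [hM, Fin.last]
      rw [this]
      simp [Fin.val_last]
      ring
    · intro b _ hb
      have : (b : ℕ) < s := by
        have := b.isLt
        have : (b:ℕ) ≠ s := fun h => hb (by ext; simp [Fin.last, h])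
        omega
      have hb0 : M b 0 = 0 := by simp [hM, this]
      rw [hb0]; ring
    · intro h; exact absurd (Finset.mem_univ _) h
  have hdet : ∀ n, (Matrix.of fun i j : Fin (s+1) => H (n + 1 + (i : ℕ) + j)).det
      = (-1)^(s+1) * c (s+1) * (Matrix.of fun i j : Fin (s+1) => H (n + (i : ℕ) + j)).det := by
    intro n
    rw [← hmul n, Matrix.det_mul, hdetM]
  have habs : ∀ n, |(Matrix.of fun i j : Fin (s+1) => H (n + 1 + (i : ℕ) + j)).det| =
      |c (s+1)| * |(Matrix.of fun i j : Fin (s+1) => H (n + (i : ℕ) + j)).det| := by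
    intro n
    rw [hdet n, abs_mul, abs_mul, abs_pow, abs_neg, abs_one, one_pow, one_mul]
  refine ⟨habs, ?_⟩
  intro n₀ h0 n hn
  induction n, hn using Nat.le_induction with
  | base => exact h0
  | succ n hn ih =>
    intro hcontra
    have := habs n
    rw [show n + 1 = n + 1 from rfl] at hcontra
    rw [hcontra] at this
    simp only [abs_zero] at this
    rcases mul_eq_zero.mp this.symm with h | h
    · exact hct (abs_eq_zero.mp h)
    · exact ih (abs_eq_zero.mp h)
end
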